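/- Let A be an integrally closed domain whose fraction field is algebraically closed. Let B be an A-algebra which is finite as an A-module and such that the structure homomorphism A → B is injective. Then there exists an A-algebra homomorphism B → A. -/

import Mathlib

/-- Let `A` be an integrally closed domain whose fraction field is algebraically closed,
and let `B` be an `A`-algebra which is finite as an `A`-module and such that `A → B` is
injective.  Then there exists an `A`-algebra homomorphism `B → A`. -/
theorem exists_algHom_to_base_of_finite
    {A B : Type*} [CommRing A] [IsDomain A] [IsIntegrallyClosed A]
    [IsAlgClosed (FractionRing A)]
    [CommRing B] [Algebra A B] [Module.Finite A B]
    (hinj : Function.Injective (algebraMap A B)) :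
    Nonempty (B →ₐ[A] A) := by
  classical
  -- B is integral over A
  have hint : Algebra.IsIntegral A B := Algebra.IsIntegral.of_finite A B
  -- find a prime Q of B lying over ⊥
  haveI : (⊥ : Ideal A).IsPrime := Ideal.bot_prime
  obtain ⟨Q, -, hQprime, hQcomap⟩ :=
    Ideal.exists_ideal_over_prime_of_isIntegral (R := A) (S := B) (⊥ : Ideal A) ⊥
      (by rw [← RingHom.ker_eq_comap_bot, (RingHom.injective_iff_ker_eq_bot _).mp hinj])
  haveI := hQprime
  -- the quotient C := B ⧸ Q
  set C := B ⧸ Q with hC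
  haveI : IsDomain C := Ideal.Quotient.isDomain Q
  have hinjAC : Function.Injective (algebraMap A C) := by
    intro a b h
    have h0 : algebraMap A C (a - b) = 0 := by rw [map_sub, h, sub_self]
    rw [IsScalarTower.algebraMap_apply A B C, Ideal.Quotient.algebraMap_eq,
      Ideal.Quotient.eq_zero_iff_mem] at h0
    have hm : a - b ∈ Ideal.comap (algebraMap A B) Q := h0
    rw [hQcomap, Ideal.mem_bot, sub_eq_zero] at hm
    exact hm
  haveI : Algebra.IsIntegral A C := by
    constructor
    intro x
    obtain ⟨b, rfl⟩ := Ideal.Quotient.mk_surjective (I := Q) x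
    exact (Algebra.IsIntegral.isIntegral (R := A) b).map (IsScalarTower.toAlgHom A B C)
  haveI : FaithfulSMul A C := (faithfulSMul_iff_algebraMap_injective A C).mpr hinjAC
  -- fraction fields
  set K := FractionRing A
  letI L := FractionRing C
  haveI : FaithfulSMul A L := FaithfulSMul.trans A C L
  haveI : Algebra.IsAlgebraic A C := Algebra.IsIntegral.isAlgebraic
  haveI : Algebra.IsAlgebraic A L :=
    (IsFractionRing.isAlgebraic_iff' A C L).mp inferInstance
  letI : Algebra K L := FractionRing.liftAlgebra A L
  haveI : IsScalarTower A K L := FractionRing.isScalarTower_liftAlgebra A L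
  haveI : Algebra.IsAlgebraic K L := by
    constructor
    intro x
    exact (IsFractionRing.isAlgebraic_iff A K L).mp (Algebra.IsAlgebraic.isAlgebraic x)
  haveI : Algebra.IsIntegral K L := Algebra.isAlgebraic_iff_isIntegral.mp inferInstance
  have hsurjKL : Function.Surjective (algebraMap K L) :=
    IsAlgClosed.algebraMap_bijective_of_isIntegral.2
  -- algebraMap A C is surjective
  have hsurjAC : Function.Surjective (algebraMap A C) := by
    intro c
    obtain ⟨k, hk⟩ := hsurjKL (algebraMap C L c)
    have hkint : IsIntegral A k := by
      refine IsIntegral.tower_bot (A := K) (B := L)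
        (FaithfulSMul.algebraMap_injective K L) ?_
      rw [hk]
      exact (Algebra.IsIntegral.isIntegral (R := A) c).map (IsScalarTower.toAlgHom A C L)
    obtain ⟨a, ha⟩ := IsIntegrallyClosed.isIntegral_iff.mp hkint
    refine ⟨a, ?_⟩
    apply FaithfulSMul.algebraMap_injective C L
    rw [← hk, ← ha, ← IsScalarTower.algebraMap_apply A C L,
      ← IsScalarTower.algebraMap_apply A K L]
  -- so algebraMap A C is a bijection
  let e : A ≃+* C := RingEquiv.ofBijective (algebraMap A C) ⟨hinjAC, hsurjAC⟩
  refine ⟨⟨(e.symm : C →+* A).comp (Ideal.Quotient.mk Q), fun a => ?_⟩⟩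
  have h1 : (Ideal.Quotient.mk Q) (algebraMap A B a) = e a := by
    rw [← Ideal.Quotient.algebraMap_eq, ← IsScalarTower.algebraMap_apply A B C]
    rfl
  show e.symm ((Ideal.Quotient.mk Q) (algebraMap A B a)) = a
  rw [h1, RingEquiv.symm_apply_apply]
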